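/- Let a_1,…,a_n be nonzero vectors in ℂ^d, let ω_1,…,ω_n ∈ (0,2), and let R = P_{a_n}^{ω_n} ∘ ⋯ ∘ P_{a_1}^{ω_1} be the composition of the corresponding relaxed projections. If x ∈ ℂ^d satisfies ‖R x‖ = ‖x‖, then ⟨x, a_j⟩ = 0 for every j = 1,…,n, and consequently R x = x. -/

import Mathlib

/-- The relaxed projection `P_a^ω x = x - ω (⟨x,a⟩/‖a‖²) a` associated to a vector `a ∈ ℂ^d`
and a real relaxation parameter `ω`. -/
noncomputable def relaxProj {d : ℕ} (a : EuclideanSpace ℂ (Fin d)) (ω : ℝ)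
    (x : EuclideanSpace ℂ (Fin d)) : EuclideanSpace ℂ (Fin d) :=
  x - ((ω : ℂ) * ((inner ℂ a x : ℂ) / (‖a‖ : ℂ) ^ 2)) • a

lemma relaxProj_norm_sq {d : ℕ} (a : EuclideanSpace ℂ (Fin d)) (ha : a ≠ 0) (ω : ℝ)
    (y : EuclideanSpace ℂ (Fin d)) :
    ‖relaxProj a ω y‖ ^ 2 = ‖y‖ ^ 2 - ω * (2 - ω) * ‖(inner ℂ a y : ℂ)‖ ^ 2 / ‖a‖ ^ 2 := by
  have hna : (0:ℝ) < ‖a‖ := norm_pos_iff.mpr ha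
  set c : ℂ := (ω : ℂ) * ((inner ℂ a y : ℂ) / (‖a‖ : ℂ) ^ 2) with hc
  set t : ℂ := (inner ℂ a y : ℂ) with ht
  have h1 : ‖relaxProj a ω y‖ ^ 2
      = ‖y‖ ^ 2 - 2 * Complex.re (inner ℂ y (c • a) : ℂ) + ‖c • a‖ ^ 2 := by
    rw [relaxProj, ← ht, ← hc]
    exact norm_sub_sq (𝕜 := ℂ) y (c • a)
  have hyat : (inner ℂ y a : ℂ) = starRingEnd ℂ t := by
    rw [ht, ← inner_conj_symm]
  have h2 : (inner ℂ y (c • a) : ℂ) = ((ω * ‖t‖ ^ 2 / ‖a‖ ^ 2 : ℝ) : ℂ) := by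
    rw [inner_smul_right, hyat, hc]
    rw [mul_assoc, div_mul_eq_mul_div, RCLike.mul_conj]
    push_cast
    ring_nf
    exact mul_right_comm _ _ _
  have h3 : ‖c • a‖ ^ 2 = ω ^ 2 * ‖t‖ ^ 2 / ‖a‖ ^ 2 := by
    have hcn : ‖c‖ = |ω| * ‖t‖ / ‖a‖ ^ 2 := by
      rw [hc, norm_mul, norm_div]
      simp [Complex.norm_real, mul_div_assoc]
    rw [norm_smul, mul_pow, hcn]
    rw [div_pow, mul_pow, sq_abs]
    field_simp
  rw [h1, h2, h3, Complex.ofReal_re]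
  field_simp
  ring

lemma relaxProj_norm_le {d : ℕ} (a : EuclideanSpace ℂ (Fin d)) (ha : a ≠ 0) {ω : ℝ}
    (hω : ω ∈ Set.Ioo (0:ℝ) 2) (y : EuclideanSpace ℂ (Fin d)) :
    ‖relaxProj a ω y‖ ≤ ‖y‖ := by
  have h := relaxProj_norm_sq a ha ω y
  have hpos : 0 ≤ ω * (2 - ω) * ‖(inner ℂ a y : ℂ)‖ ^ 2 / ‖a‖ ^ 2 := by
    apply div_nonneg
    · have := hω.1; have := hω.2
      have : 0 ≤ ω * (2 - ω) := le_of_lt (mul_pos hω.1 (by linarith [hω.2]))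
      positivity
    · positivity
  have : ‖relaxProj a ω y‖ ^ 2 ≤ ‖y‖ ^ 2 := by rw [h]; linarith
  exact (pow_le_pow_iff_left₀ (norm_nonneg _) (norm_nonneg _) two_ne_zero).mp this

lemma relaxProj_norm_eq {d : ℕ} (a : EuclideanSpace ℂ (Fin d)) (ha : a ≠ 0) {ω : ℝ}
    (hω : ω ∈ Set.Ioo (0:ℝ) 2) (y : EuclideanSpace ℂ (Fin d))
    (h : ‖relaxProj a ω y‖ = ‖y‖) : (inner ℂ a y : ℂ) = 0 ∧ relaxProj a ω y = y := by
  have hsq := relaxProj_norm_sq a ha ω y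
  rw [h] at hsq
  have hna : (0:ℝ) < ‖a‖ := norm_pos_iff.mpr ha
  have hzero : ‖(inner ℂ a y : ℂ)‖ ^ 2 = 0 := by
    have h1 : ω * (2 - ω) * ‖(inner ℂ a y : ℂ)‖ ^ 2 / ‖a‖ ^ 2 = 0 := by linarith
    have h2 : 0 < ω * (2 - ω) := mul_pos hω.1 (by linarith [hω.2])
    have := (div_eq_zero_iff.mp h1).resolve_right (by positivity)
    exact (mul_eq_zero.mp this).resolve_left (by positivity)
  have hi : (inner ℂ a y : ℂ) = 0 := by
    rwa [pow_eq_zero_iff two_ne_zero, norm_eq_zero] at hzero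
  refine ⟨hi, ?_⟩
  rw [relaxProj, hi]
  simp

lemma foldl_norm_le {d n : ℕ} (a : Fin n → EuclideanSpace ℂ (Fin d)) (ha : ∀ i, a i ≠ 0)
    (ω : Fin n → ℝ) (hω : ∀ i, ω i ∈ Set.Ioo (0 : ℝ) 2) (l : List (Fin n)) :
    ∀ x, ‖l.foldl (fun y i => relaxProj (a i) (ω i) y) x‖ ≤ ‖x‖ := by
  induction l with
  | nil => intro x; simp
  | cons i l ih =>
    intro x
    calc ‖(i :: l).foldl (fun y i => relaxProj (a i) (ω i) y) x‖
        = ‖l.foldl (fun y i => relaxProj (a i) (ω i) y) (relaxProj (a i) (ω i) x)‖ := rfl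
      _ ≤ ‖relaxProj (a i) (ω i) x‖ := ih _
      _ ≤ ‖x‖ := relaxProj_norm_le (a i) (ha i) (hω i) x

lemma foldl_norm_eq {d n : ℕ} (a : Fin n → EuclideanSpace ℂ (Fin d)) (ha : ∀ i, a i ≠ 0)
    (ω : Fin n → ℝ) (hω : ∀ i, ω i ∈ Set.Ioo (0 : ℝ) 2) (l : List (Fin n)) :
    ∀ x, ‖l.foldl (fun y i => relaxProj (a i) (ω i) y) x‖ = ‖x‖ →
      (∀ i ∈ l, (inner ℂ (a i) x : ℂ) = 0) ∧
        l.foldl (fun y i => relaxProj (a i) (ω i) y) x = x := by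
  induction l with
  | nil => intro x _; simp
  | cons i l ih =>
    intro x hx
    have hfold : (i :: l).foldl (fun y i => relaxProj (a i) (ω i) y) x
        = l.foldl (fun y i => relaxProj (a i) (ω i) y) (relaxProj (a i) (ω i) x) := rfl
    have h1 : ‖relaxProj (a i) (ω i) x‖ = ‖x‖ := by
      refine le_antisymm (relaxProj_norm_le (a i) (ha i) (hω i) x) ?_
      calc ‖x‖ = ‖(i :: l).foldl (fun y i => relaxProj (a i) (ω i) y) x‖ := hx.symm
        _ ≤ ‖relaxProj (a i) (ω i) x‖ := by
            rw [hfold]; exact foldl_norm_le a ha ω hω l _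
    obtain ⟨hi0, hfix⟩ := relaxProj_norm_eq (a i) (ha i) (hω i) x h1
    rw [hfold, hfix] at hx
    obtain ⟨h2, h3⟩ := ih x hx
    refine ⟨?_, by rw [hfold, hfix]; exact h3⟩
    intro j hj
    rcases List.mem_cons.mp hj with h | h
    · rw [h]; exact hi0
    · exact h2 j h

/-- If `R = P_{a_n}^{ω_n} ∘ ⋯ ∘ P_{a_1}^{ω_1}` with all `ω_j ∈ (0,2)` and
`‖R x‖ = ‖x‖`, then `⟨x, a_j⟩ = 0` for every `j`, and consequently `R x = x`. -/
theorem stmt_5 {d n : ℕ} (a : Fin n → EuclideanSpace ℂ (Fin d)) (ha : ∀ i, a i ≠ 0)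
    (ω : Fin n → ℝ) (hω : ∀ i, ω i ∈ Set.Ioo (0 : ℝ) 2)
    (R : EuclideanSpace ℂ (Fin d) → EuclideanSpace ℂ (Fin d))
    (hR : ∀ x, R x = (List.finRange n).foldl (fun y i => relaxProj (a i) (ω i) y) x)
    (x : EuclideanSpace ℂ (Fin d)) (hx : ‖R x‖ = ‖x‖) :
    (∀ j, (inner ℂ (a j) x : ℂ) = 0) ∧ R x = x := by
  rw [hR x] at hx
  obtain ⟨h1, h2⟩ := foldl_norm_eq a ha ω hω (List.finRange n) x hx
  exact ⟨fun j => h1 j (List.mem_finRange j), by rw [hR x]; exact h2⟩
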